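/- Exact case (McLennan's theorem as the ε = 0 instance): suppose there are at least three candidates. If an anonymous randomized voting rule v is pairwise responsive, pairwise isolated, and satisfies 0-super-weak unanimity (for every candidate x there is a profile with x on top of every ordering on which x is selected with probability 1), then v equals the random dictatorship rule: v(x, P⃗) = |{i : top(P_i)=x}|/n for every profile P⃗ and candidate x. -/

import Mathlib

open Finset

variable {C : Type*}

/-- A preference ordering on `C`: a ranking of the candidates, where a higher
rank means more preferred. -/
abbrev Pref (C : Type*) [Fintype C] := C ≃ Fin (Fintype.card C)

/-- `x` is strictly preferred to `y` in `P`. -/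
def PrefOver [Fintype C] (P : Pref C) (x y : C) : Prop := P y < P x

/-- The top (most preferred) candidate of `P`. -/
def topC [Fintype C] [Nonempty C] (P : Pref C) : C :=
  P.symm ⟨Fintype.card C - 1, Nat.sub_lt Fintype.card_pos Nat.one_pos⟩

/-- `x` is directly above `y` in `P`. -/
def DirAbove [Fintype C] (P : Pref C) (x y : C) : Prop := (P x : ℕ) = (P y : ℕ) + 1

/-- The ordering `P` with candidates `x` and `y` swapped. -/
def swapIn [Fintype C] [DecidableEq C] (P : Pref C) (x y : C) : Pref C :=
  (Equiv.swap x y).trans P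

/-- A (randomized) voting rule: nonnegative selection probabilities summing to 1. -/
def IsVotingRule [Fintype C] {n : ℕ} (v : (Fin n → Pref C) → C → ℝ) : Prop :=
  (∀ Pvec x, 0 ≤ v Pvec x) ∧ (∀ Pvec, ∑ x, v Pvec x = 1)

def Anonymous [Fintype C] {n : ℕ} (v : (Fin n → Pref C) → C → ℝ) : Prop :=
  ∀ (σ : Equiv.Perm (Fin n)) (Pvec : Fin n → Pref C) (x : C), v (Pvec ∘ σ) x = v Pvec x

/-- Expected utility of a distribution `d` over candidates under utility `u`. -/
def EU [Fintype C] (u : C → ℝ) (d : C → ℝ) : ℝ := ∑ x, u x * d x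

/-- A `[0,1]`-valued utility function consistent with the ordering `P`. -/
def Consistent [Fintype C] (u : C → ℝ) (P : Pref C) : Prop :=
  (∀ x, u x ∈ Set.Icc (0 : ℝ) 1) ∧ ∀ x y, u x > u y ↔ PrefOver P x y

/-- The random dictatorship voting rule. -/
noncomputable def vdict [Fintype C] [Nonempty C] [DecidableEq C] {n : ℕ}
    (Pvec : Fin n → Pref C) (x : C) : ℝ :=
  ((Finset.univ.filter (fun i => topC (Pvec i) = x)).card : ℝ) / n

def StrategyProofRule [Fintype C] {n : ℕ} (v : (Fin n → Pref C) → C → ℝ) : Prop :=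
  ∀ (i : Fin n) (Pvec : Fin n → Pref C) (P' : Pref C) (u : C → ℝ),
    Consistent u (Pvec i) → EU u (v (Function.update Pvec i P')) ≤ EU u (v Pvec)

def IsBelief [Fintype C] [DecidableEq C] (φ : Pref C → ℝ) : Prop :=
  (∀ P, 0 ≤ φ P) ∧ ∑ P, φ P = 1

/-- The profile where voter `i` submits `Pi` and the other voters submit `Q`. -/
def profileWith [Fintype C] {n : ℕ} (i : Fin n) (Q : {j : Fin n // j ≠ i} → Pref C)
    (Pi : Pref C) : Fin n → Pref C :=
  fun j => if h : j = i then Pi else Q ⟨j, h⟩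

/-- Expected utility for voter `i` reporting `Pi` when the others' orderings are
i.i.d. with distribution `φ`. -/
noncomputable def beliefEU [Fintype C] [DecidableEq C] {n : ℕ}
    (v : (Fin n → Pref C) → C → ℝ) (i : Fin n) (φ : Pref C → ℝ) (u : C → ℝ)
    (Pi : Pref C) : ℝ :=
  ∑ Q : {j : Fin n // j ≠ i} → Pref C, (∏ j, φ (Q j)) * EU u (v (profileWith i Q Pi))

/-- Strategy-proofness with respect to a single i.i.d. belief `φ`. -/
def SPwrtBelief [Fintype C] [DecidableEq C] {n : ℕ}
    (v : (Fin n → Pref C) → C → ℝ) (φ : Pref C → ℝ) : Prop :=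
  ∀ (i : Fin n) (Pi Pi' : Pref C) (u : C → ℝ),
    Consistent u Pi → beliefEU v i φ u Pi' ≤ beliefEU v i φ u Pi

/-- Weak strategy-proofness: strategy-proofness w.r.t. all i.i.d. beliefs. -/
def WeaklySP [Fintype C] [DecidableEq C] {n : ℕ}
    (v : (Fin n → Pref C) → C → ℝ) : Prop :=
  ∀ φ : Pref C → ℝ, IsBelief φ → SPwrtBelief v φ

def ParetoEff [Fintype C] {n : ℕ} (ε : ℝ) (v : (Fin n → Pref C) → C → ℝ) : Prop :=
  ∀ (x y : C) (Pvec : Fin n → Pref C), (∀ i, PrefOver (Pvec i) x y) → v Pvec y ≤ ε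

def StrongUnanimity [Fintype C] [Nonempty C] {n : ℕ} (ε : ℝ)
    (v : (Fin n → Pref C) → C → ℝ) : Prop :=
  ∀ (x : C) (Pvec : Fin n → Pref C), (∀ i, topC (Pvec i) = x) → 1 - ε ≤ v Pvec x

def WeakUnanimity [Fintype C] [Nonempty C] {n : ℕ} (ε : ℝ)
    (v : (Fin n → Pref C) → C → ℝ) : Prop :=
  ∀ P : Pref C, 1 - ε ≤ v (fun _ => P) (topC P)

def SuperWeakUnanimity [Fintype C] [Nonempty C] {n : ℕ} (ε : ℝ)
    (v : (Fin n → Pref C) → C → ℝ) : Prop :=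
  ∀ x : C, ∃ Pvec : Fin n → Pref C, (∀ i, topC (Pvec i) = x) ∧ 1 - ε ≤ v Pvec x

def PairwiseResponsive [Fintype C] [DecidableEq C] {n : ℕ}
    (v : (Fin n → Pref C) → C → ℝ) : Prop :=
  ∀ (Pvec : Fin n → Pref C) (i : Fin n) (x y z : C),
    DirAbove (Pvec i) x y → z ≠ x → z ≠ y →
      v (Function.update Pvec i (swapIn (Pvec i) x y)) z = v Pvec z

def PairwiseIsolated [Fintype C] [DecidableEq C] {n : ℕ}
    (v : (Fin n → Pref C) → C → ℝ) : Prop :=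
  ∀ (i : Fin n) (Pvec Pvec' : Fin n → Pref C) (x y : C),
    DirAbove (Pvec i) x y → Pvec' i = Pvec i →
    (∀ j, j ≠ i → (PrefOver (Pvec j) x y ↔ PrefOver (Pvec' j) x y)) →
    v (Function.update Pvec' i (swapIn (Pvec' i) x y)) y - v Pvec' y =
      v (Function.update Pvec i (swapIn (Pvec i) x y)) y - v Pvec y

/-- The ordering `e` with candidate `x` moved to the top (relative order of the
other candidates preserved). -/
def moveToTop [Fintype C] [DecidableEq C] (e : Pref C) (x : C) : Pref C :=
  e.trans ((Fin.revPerm.trans (Fin.cycleRange (e x).rev)).trans Fin.revPerm)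

/-- The ordering `e` with candidate `x` moved to the bottom (relative order of
the other candidates preserved). -/
def moveToBot [Fintype C] [DecidableEq C] (e : Pref C) (x : C) : Pref C :=
  e.trans (Fin.cycleRange (e x))

/-- The canonical profile `P⃗^{x,j}`: the first `j` voters rank `x` on top and
the remaining voters rank `x` on the bottom, with the other candidates ordered
according to the fixed ordering `e`. -/
def canonProfile [Fintype C] [DecidableEq C] {n : ℕ} (e : Pref C) (x : C) (j : ℕ) :
    Fin n → Pref C :=
  fun i => if (i : ℕ) < j then moveToTop e x else moveToBot e x

/-- `v'(x,j)`: the selection probability of `x` on the canonical profile with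
exactly `j` voters ranking `x` first. -/
def vTopCount [Fintype C] [DecidableEq C] {n : ℕ} (v : (Fin n → Pref C) → C → ℝ)
    (e : Pref C) (x : C) (j : ℕ) : ℝ :=
  v (canonProfile e x j) x

section Lemmas
set_option linter.unusedSectionVars false

variable [Fintype C] [Nonempty C] [DecidableEq C]

lemma prefover_def (P : Pref C) (a b : C) : PrefOver P a b ↔ (P b : ℕ) < (P a : ℕ) :=
  Fin.lt_def

lemma prefover_ne {P : Pref C} {a b : C} (h : PrefOver P a b) : a ≠ b := by
  rintro rfl; exact lt_irrefl _ h

lemma prefover_asymm {P : Pref C} {a b : C} (h : PrefOver P a b) : ¬ PrefOver P b a := by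
  simp only [prefover_def] at *; omega

lemma prefover_total {P : Pref C} {a b : C} (h : a ≠ b) : PrefOver P a b ∨ PrefOver P b a := by
  have : P a ≠ P b := fun he => h (P.injective he)
  simp only [prefover_def]
  rcases Fin.lt_or_lt_of_ne this with h' | h'
  · exact Or.inr (Fin.lt_def.mp h')
  · exact Or.inl (Fin.lt_def.mp h')

lemma rank_lt_card (P : Pref C) (a : C) : (P a : ℕ) < Fintype.card C := (P a).isLt

lemma rank_inj {P : Pref C} {a b : C} (h : (P a : ℕ) = (P b : ℕ)) : a = b :=
  P.injective (Fin.ext h)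

lemma topC_rank (P : Pref C) : (P (topC P) : ℕ) = Fintype.card C - 1 := by
  simp [topC]

lemma topC_eq_iff {P : Pref C} {c : C} : topC P = c ↔ (P c : ℕ) = Fintype.card C - 1 := by
  constructor
  · rintro rfl; exact topC_rank P
  · intro h
    have : P c = ⟨Fintype.card C - 1, Nat.sub_lt Fintype.card_pos Nat.one_pos⟩ := Fin.ext h
    simp [topC, ← this]

lemma not_prefover_top {P : Pref C} {c : C} (h : topC P = c) (z : C) : ¬ PrefOver P z c := by
  rw [topC_eq_iff] at h
  rw [prefover_def, h]
  have := rank_lt_card P z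
  omega

lemma prefover_topC {P : Pref C} {z : C} (h : z ≠ topC P) : PrefOver P (topC P) z := by
  rw [prefover_def, topC_rank]
  have h1 := rank_lt_card P z
  have h2 : (P z : ℕ) ≠ Fintype.card C - 1 := fun hc => h (topC_eq_iff.mpr hc).symm
  omega

lemma swapIn_apply_left (P : Pref C) (a b : C) : swapIn P a b a = P b := by
  simp [swapIn]

lemma swapIn_apply_right (P : Pref C) (a b : C) : swapIn P a b b = P a := by
  simp [swapIn]

lemma swapIn_apply_other (P : Pref C) {a b z : C} (hz1 : z ≠ a) (hz2 : z ≠ b) :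
    swapIn P a b z = P z := by
  simp [swapIn, Equiv.swap_apply_of_ne_of_ne hz1 hz2]

lemma swapIn_swapIn (P : Pref C) (a b : C) : swapIn (swapIn P a b) a b = P := by
  ext c
  simp [swapIn]

lemma dirAbove_ne {P : Pref C} {a b : C} (h : DirAbove P a b) : a ≠ b := by
  intro he; rw [he] at h; exact Nat.succ_ne_self _ h.symm

lemma dirAbove_prefover {P : Pref C} {a b : C} (h : DirAbove P a b) : PrefOver P a b := by
  have h' : (P a : ℕ) = (P b : ℕ) + 1 := h
  rw [prefover_def]; omega

/-- A strictly monotone self-map of `Fin m` is the identity. -/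
lemma strictMono_fin_eq_id {m : ℕ} {f : Fin m → Fin m} (hf : StrictMono f) : ∀ k, f k = k := by
  have hsurj : Function.Surjective f :=
    Finite.surjective_of_injective hf.injective
  have hr : Set.range f = Set.range (id : Fin m → Fin m) := by
    rw [Set.range_id, Set.range_eq_univ]; exact hsurj
  haveI : WellFoundedLT (Fin m) := Finite.to_wellFoundedLT
  have : f = id := (StrictMono.range_inj hf strictMono_id).mp hr
  intro k; rw [this]; rfl

/-- Two orderings with the same strict order relation are equal. -/
lemma pref_ext {P Q : Pref C} (h : ∀ a b, PrefOver P a b → PrefOver Q a b) : P = Q := by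
  have hf : StrictMono (fun k => Q (P.symm k)) := by
    intro k l hkl
    have : PrefOver P (P.symm l) (P.symm k) := by
      rw [prefover_def]; simpa using Fin.lt_def.mp hkl
    have := h _ _ this
    rw [prefover_def] at this
    exact Fin.lt_def.mpr this
  ext c
  have := strictMono_fin_eq_id hf (P c)
  simp only [Equiv.symm_apply_apply, id] at this
  exact congrArg Fin.val this.symm

end Lemmas

section Lemmas2
set_option linter.unusedSectionVars false
open Classical in
/-- The set of ordered pairs on which two orderings disagree. -/
noncomputable def invSet [Fintype C] (P Q : Pref C) : Finset (C × C) :=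
  Finset.univ.filter (fun p => PrefOver P p.1 p.2 ∧ PrefOver Q p.2 p.1)

variable [Fintype C] [Nonempty C] [DecidableEq C]

lemma mem_invSet {P Q : Pref C} {a b : C} :
    (a, b) ∈ invSet P Q ↔ PrefOver P a b ∧ PrefOver Q b a := by
  simp [invSet]

lemma eq_of_invSet_empty {P Q : Pref C} (h : invSet P Q = ∅) : P = Q := by
  apply pref_ext
  intro a b hab
  have hne : a ≠ b := prefover_ne hab
  rcases prefover_total (P := Q) hne with h' | h'
  · exact h'
  · exact absurd (Finset.eq_empty_iff_forall_notMem.mp h (a, b)) (by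
      rw [mem_invSet]; exact fun hc => hc ⟨hab, h'⟩)

/-- Exchange: if `P ≠ Q` there is an adjacent pair in `P` inverted in `Q`. -/
lemma exch {P Q : Pref C} (hne : P ≠ Q) : ∃ a b, DirAbove P a b ∧ PrefOver Q b a := by
  have hnonempty : (invSet P Q).Nonempty := by
    rw [Finset.nonempty_iff_ne_empty]
    exact fun h => hne (eq_of_invSet_empty h)
  obtain ⟨p, hp, hmin⟩ := Finset.exists_min_image (invSet P Q)
    (fun p => (P p.1 : ℕ) - (P p.2 : ℕ)) hnonempty
  obtain ⟨a, b⟩ := p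
  rw [mem_invSet] at hp
  obtain ⟨hPab, hQba⟩ := hp
  have hab : (P b : ℕ) < (P a : ℕ) := (prefover_def P a b).mp hPab
  by_cases hadj : (P a : ℕ) = (P b : ℕ) + 1
  · exact ⟨a, b, hadj, hQba⟩
  · exfalso
    have hlt : (P b : ℕ) + 1 < (P a : ℕ) := by omega
    set c := P.symm ⟨(P b : ℕ) + 1, lt_trans hlt (rank_lt_card P a)⟩ with hc
    have hrc : (P c : ℕ) = (P b : ℕ) + 1 := by
      rw [hc]; simp
    have hca : c ≠ a := fun h => by rw [h] at hrc; omega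
    have hcb : c ≠ b := fun h => by rw [h] at hrc; omega
    have hPac : PrefOver P a c := by rw [prefover_def]; omega
    have hPcb : PrefOver P c b := by rw [prefover_def]; omega
    have hQac : PrefOver Q a c := by
      rcases prefover_total (P := Q) hca.symm with h' | h'
      · exact h'
      · exfalso
        have : (c, b) ∈ invSet P Q := by
          rw [mem_invSet]
          refine ⟨hPcb, ?_⟩
          rcases prefover_total (P := Q) hcb with h'' | h''
          · exfalso
            -- then Q: c above a? and hQba : b above a. Need contradiction with h'' : c above b?
            -- from h'' : PrefOver Q c b, h' : PrefOver Q c a: no contradiction yet.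
            -- Instead use minimality with pair (a, c).
            have : (a, c) ∈ invSet P Q := mem_invSet.mpr ⟨hPac, h'⟩
            have := hmin _ this
            simp only at this
            omega
          · exact h''
        have := hmin _ this
        simp only at this
        omega
    have hQcb : PrefOver Q c b := by
      rcases prefover_total (P := Q) hcb with h'' | h''
      · exact h''
      · exfalso
        have : (c, b) ∈ invSet P Q := mem_invSet.mpr ⟨hPcb, by
          rcases prefover_total (P := Q) hcb with h3 | h3
          · exact absurd h'' (prefover_asymm h3)
          · exact h3⟩
        have := hmin _ this
        simp only at this
        omega
    -- transitivity: Q b < Q c < Q a contradicts hQba : Q a < Q b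
    rw [prefover_def] at hQac hQcb hQba
    omega

end Lemmas2

section Lemmas3
set_option linter.unusedSectionVars false
variable [Fintype C] [Nonempty C] [DecidableEq C]

lemma swapIn_rank_left (P : Pref C) (a b : C) : (swapIn P a b a : ℕ) = (P b : ℕ) := by
  rw [swapIn_apply_left]

lemma pref_swapIn_iff {P : Pref C} {a b : C} (hd : DirAbove P a b) {z y : C}
    (hy1 : y ≠ a) (hy2 : y ≠ b) : PrefOver (swapIn P a b) z y ↔ PrefOver P z y := by
  have hd' : (P a : ℕ) = (P b : ℕ) + 1 := hd
  have hab : a ≠ b := dirAbove_ne hd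
  have hyr : swapIn P a b y = P y := swapIn_apply_other P hy1 hy2
  by_cases hza : z = a
  · rw [prefover_def, prefover_def, hyr, hza, swapIn_apply_left]
    have h1 : (P y : ℕ) ≠ (P a : ℕ) := fun h => hy1 (rank_inj h)
    have h2 : (P y : ℕ) ≠ (P b : ℕ) := fun h => hy2 (rank_inj h)
    omega
  · by_cases hzb : z = b
    · rw [prefover_def, prefover_def, hyr, hzb, swapIn_apply_right]
      have h1 : (P y : ℕ) ≠ (P a : ℕ) := fun h => hy1 (rank_inj h)
      have h2 : (P y : ℕ) ≠ (P b : ℕ) := fun h => hy2 (rank_inj h)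
      omega
    · rw [prefover_def, prefover_def, hyr, swapIn_apply_other P hza hzb]

lemma swapIn_val (P : Pref C) (a b w : C) :
    (swapIn P a b w : ℕ) = if w = a then (P b : ℕ) else if w = b then (P a : ℕ) else (P w : ℕ) := by
  split_ifs with h1 h2
  · subst h1; rw [swapIn_apply_left]
  · subst h2; rw [swapIn_apply_right]
  · rw [swapIn_apply_other P h1 h2]

lemma invSet_swap_subset {P Q : Pref C} {a b : C} (hd : DirAbove P a b)
    (hQ : PrefOver Q b a) :
    invSet (swapIn P a b) Q ⊆ (invSet P Q).erase (a, b) := by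
  have hd' : (P a : ℕ) = (P b : ℕ) + 1 := hd
  have hab : a ≠ b := dirAbove_ne hd
  intro p hp
  obtain ⟨z, y⟩ := p
  rw [mem_invSet] at hp
  obtain ⟨h1, h2⟩ := hp
  rw [Finset.mem_erase, mem_invSet]
  rw [prefover_def] at h1
  rw [swapIn_val, swapIn_val] at h1
  have hy2 : (z, y) ≠ (a, b) := by
    intro he
    rw [Prod.mk.injEq] at he
    obtain ⟨hz, hy⟩ := he
    rw [hz, hy] at h1
    simp [Ne.symm hab] at h1
    omega
  refine ⟨hy2, ?_, h2⟩
  rw [prefover_def]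
  have e1 : ∀ w u : C, w ≠ u → (P w : ℕ) ≠ (P u : ℕ) := fun w u h hc => h (rank_inj hc)
  by_cases hza : z = a
  · by_cases hya : y = a
    · exfalso; rw [hya, ← hza] at h2; exact prefover_asymm h2 h2
    · by_cases hyb : y = b
      · exfalso; exact hy2 (by rw [hza, hyb])
      · simp only [if_pos hza, if_neg hya, if_neg hyb] at h1
        rw [hza]
        omega
  · by_cases hzb : z = b
    · by_cases hya : y = a
      · exfalso; rw [hzb, hya] at h2; exact prefover_asymm hQ h2
      · by_cases hyb : y = b
        · exfalso; rw [hyb, ← hzb] at h2; exact prefover_asymm h2 h2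
        · simp only [if_neg hza, if_pos hzb, if_neg hya, if_neg hyb] at h1
          rw [hzb]
          have := e1 y b hyb
          omega
    · by_cases hya : y = a
      · simp only [if_neg hza, if_neg hzb, if_pos hya] at h1
        rw [hya]
        have := e1 z a hza
        omega
      · by_cases hyb : y = b
        · simp only [if_neg hza, if_neg hzb, if_neg hya, if_pos hyb] at h1
          rw [hyb]; omega
        · simp only [if_neg hza, if_neg hzb, if_neg hya, if_neg hyb] at h1; omega

lemma invSet_mem_swap {P Q : Pref C} {a b : C} (hd : DirAbove P a b)
    (hQ : PrefOver Q b a) : (a, b) ∈ invSet P Q :=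
  mem_invSet.mpr ⟨dirAbove_prefover hd, hQ⟩

end Lemmas3

section Lemmas4
set_option linter.unusedSectionVars false
variable [Fintype C] [Nonempty C] [DecidableEq C] {n : ℕ}
  {v : (Fin n → Pref C) → C → ℝ}

lemma ML_aux (hpr : PairwiseResponsive v) (y : C) :
    ∀ (k : ℕ) (Pvec : Fin n → Pref C) (i : Fin n) (B' : Pref C),
      (∀ z, PrefOver (Pvec i) z y ↔ PrefOver B' z y) → (invSet (Pvec i) B').card ≤ k →
      v (Function.update Pvec i B') y = v Pvec y := by
  intro k
  induction k with
  | zero =>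
    intro Pvec i B' h hcard
    have : invSet (Pvec i) B' = ∅ := Finset.card_eq_zero.mp (Nat.le_zero.mp hcard)
    have heq : Pvec i = B' := eq_of_invSet_empty this
    rw [← heq, Function.update_eq_self]
  | succ k IH =>
    intro Pvec i B' h hcard
    by_cases hne : Pvec i = B'
    · rw [← hne, Function.update_eq_self]
    · obtain ⟨a, b, hd, hQ⟩ := exch hne
      have ha : y ≠ a := by
        rintro rfl
        exact prefover_asymm (dirAbove_prefover hd) ((h b).mpr hQ)
      have hb : y ≠ b := by
        rintro rfl
        exact prefover_asymm ((h a).mp (dirAbove_prefover hd)) hQ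
      set B₂ := swapIn (Pvec i) a b with hB₂
      have hagree : ∀ z, PrefOver B₂ z y ↔ PrefOver B' z y :=
        fun z => (pref_swapIn_iff hd ha hb (z := z)).trans (h z)
      have hcard2 : (invSet B₂ B').card ≤ k := by
        rw [hB₂]
        have h1 := Finset.card_le_card (invSet_swap_subset hd hQ)
        rw [Finset.card_erase_of_mem (invSet_mem_swap hd hQ)] at h1
        have h2 : 1 ≤ (invSet (Pvec i) B').card :=
          Finset.card_pos.mpr ⟨_, invSet_mem_swap hd hQ⟩
        omega
      have hstep : v (Function.update Pvec i B₂) y = v Pvec y :=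
        hpr Pvec i a b y hd ha hb
      have hiter : v (Function.update Pvec i B') y
          = v (Function.update (Function.update Pvec i B₂) i B') y := by
        rw [Function.update_idem]
      rw [hiter, IH _ i B' (by simpa using hagree) (by simpa using hcard2), hstep]

lemma ML (hpr : PairwiseResponsive v) {y : C} {Pvec : Fin n → Pref C} {i : Fin n}
    {B' : Pref C} (h : ∀ z, PrefOver (Pvec i) z y ↔ PrefOver B' z y) :
    v (Function.update Pvec i B') y = v Pvec y :=
  ML_aux hpr y _ Pvec i B' h le_rfl

lemma ML_profile (hpr : PairwiseResponsive v) {y : C} {Pvec Qvec : Fin n → Pref C}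
    (h : ∀ i z, PrefOver (Pvec i) z y ↔ PrefOver (Qvec i) z y) :
    v Pvec y = v Qvec y := by
  classical
  have key : ∀ s : Finset (Fin n),
      v (fun j => if j ∈ s then Qvec j else Pvec j) y = v Pvec y := by
    intro s
    induction s using Finset.induction_on with
    | empty => simp
    | insert _ _ hi =>
      rename_i i s IH
      have hprof : (fun j => if j ∈ insert i s then Qvec j else Pvec j)
          = Function.update (fun j => if j ∈ s then Qvec j else Pvec j) i (Qvec i) := by
        funext j
        by_cases hj : j = i
        · subst hj; simp [hi]
        · simp [Function.update_of_ne hj, Finset.mem_insert, hj]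
      rw [hprof, ML hpr (by
        intro z
        simp only [if_neg hi]
        exact h i z), IH]
  have := key Finset.univ
  simpa using this.symm

lemma v_nonneg (hv : IsVotingRule v) (P : Fin n → Pref C) (x : C) : 0 ≤ v P x := hv.1 P x

lemma v_le_one (hv : IsVotingRule v) (P : Fin n → Pref C) (x : C) : v P x ≤ 1 := by
  have h1 := hv.2 P
  have : v P x ≤ ∑ z, v P z :=
    Finset.single_le_sum (fun z _ => hv.1 P z) (Finset.mem_univ x)
  linarith

lemma v_eq_zero_of_other (hv : IsVotingRule v) {P : Fin n → Pref C} {c x : C}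
    (hc : v P c = 1) (hx : x ≠ c) : v P x = 0 := by
  have hpair : v P c + v P x = ∑ z ∈ ({c, x} : Finset C), v P z :=
    (Finset.sum_pair (Ne.symm hx)).symm
  have hle : ∑ z ∈ ({c, x} : Finset C), v P z ≤ ∑ z, v P z :=
    Finset.sum_le_sum_of_subset_of_nonneg (Finset.subset_univ _)
      (fun z _ _ => hv.1 P z)
  have h1 := hv.2 P
  have h2 := hv.1 P x
  linarith

lemma strong_unanimity (hv : IsVotingRule v) (hpr : PairwiseResponsive v)
    (hsw : SuperWeakUnanimity 0 v) {c : C} {Pvec : Fin n → Pref C}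
    (h : ∀ i, topC (Pvec i) = c) : v Pvec c = 1 := by
  obtain ⟨W, hWt, hW1⟩ := hsw c
  have hW : v W c = 1 := le_antisymm (v_le_one hv W c) (by linarith)
  rw [ML_profile hpr (Qvec := W) (fun i z =>
    iff_of_false (not_prefover_top (h i) z) (not_prefover_top (hWt i) z)), hW]

lemma strong_unanimity_zero (hv : IsVotingRule v) (hpr : PairwiseResponsive v)
    (hsw : SuperWeakUnanimity 0 v) {c x : C} {Pvec : Fin n → Pref C}
    (h : ∀ i, topC (Pvec i) = c) (hx : x ≠ c) : v Pvec x = 0 :=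
  v_eq_zero_of_other hv (strong_unanimity hv hpr hsw h) hx

end Lemmas4

section Lemmas5
set_option linter.unusedSectionVars false

lemma cycleRange_val_lt {m : ℕ} {i j : Fin m} (h : j < i) :
    (Fin.cycleRange i j : ℕ) = (j : ℕ) + 1 := by
  cases m with
  | zero => exact i.elim0
  | succ k => exact Fin.coe_cycleRange_of_lt h

lemma cycleRange_val_gt {m : ℕ} {i j : Fin m} (h : i < j) :
    (Fin.cycleRange i j : ℕ) = (j : ℕ) := by
  cases m with
  | zero => exact i.elim0
  | succ k => rw [Fin.cycleRange_of_gt h]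

lemma cycleRange_val_self {m : ℕ} (i : Fin m) : (Fin.cycleRange i i : ℕ) = 0 := by
  cases m with
  | zero => exact i.elim0
  | succ k => rw [Fin.cycleRange_self]; rfl

variable [Fintype C] [Nonempty C] [DecidableEq C]

lemma mt_apply (e : Pref C) (x z : C) :
    moveToTop e x z = Fin.rev (Fin.cycleRange (e x).rev (Fin.rev (e z))) := rfl

lemma mt_val_self (e : Pref C) (x : C) :
    ((moveToTop e x) x : ℕ) = Fintype.card C - 1 := by
  rw [mt_apply]
  rw [show Fin.cycleRange (e x).rev (e x).rev = 0 from
    Fin.ext (cycleRange_val_self (e x).rev)]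
  simp [Fin.val_rev]

lemma mt_val_lt {e : Pref C} {x z : C} (h : (e z : ℕ) < (e x : ℕ)) :
    ((moveToTop e x) z : ℕ) = (e z : ℕ) := by
  rw [mt_apply]
  have hb1 := (e z).isLt
  have hb2 := (e x).isLt
  have hgt : (e x).rev < (e z).rev := by
    rw [Fin.lt_def, Fin.val_rev, Fin.val_rev]
    omega
  rw [show Fin.cycleRange (e x).rev (e z).rev = (e z).rev from
    Fin.ext (cycleRange_val_gt hgt)]
  simp only [Fin.rev_rev]

lemma mt_val_gt {e : Pref C} {x z : C} (h : (e x : ℕ) < (e z : ℕ)) :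
    ((moveToTop e x) z : ℕ) = (e z : ℕ) - 1 := by
  rw [mt_apply]
  have hb1 := (e z).isLt
  have hb2 := (e x).isLt
  have hlt : (e z).rev < (e x).rev := by
    rw [Fin.lt_def, Fin.val_rev, Fin.val_rev]
    omega
  rw [Fin.val_rev, cycleRange_val_lt hlt, Fin.val_rev]
  omega

lemma mt_topC (e : Pref C) (x : C) : topC (moveToTop e x) = x :=
  topC_eq_iff.mpr (mt_val_self e x)

lemma mt_pref {e : Pref C} {x z w : C} (hz : z ≠ x) (hw : w ≠ x) :
    PrefOver (moveToTop e x) z w ↔ PrefOver e z w := by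
  have hz' : (e z : ℕ) ≠ (e x : ℕ) := fun h => hz (rank_inj h)
  have hw' : (e w : ℕ) ≠ (e x : ℕ) := fun h => hw (rank_inj h)
  rw [prefover_def, prefover_def]
  rcases Nat.lt_or_ge (e z : ℕ) (e x : ℕ) with h1 | h1 <;>
    rcases Nat.lt_or_ge (e w : ℕ) (e x : ℕ) with h2 | h2
  · rw [mt_val_lt h1, mt_val_lt h2]
  · have h2' : (e x : ℕ) < (e w : ℕ) := by omega
    rw [mt_val_lt h1, mt_val_gt h2']
    omega
  · have h1' : (e x : ℕ) < (e z : ℕ) := by omega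
    rw [mt_val_gt h1', mt_val_lt h2]
    omega
  · have h1' : (e x : ℕ) < (e z : ℕ) := by omega
    have h2' : (e x : ℕ) < (e w : ℕ) := by omega
    rw [mt_val_gt h1', mt_val_gt h2']
    omega

lemma mb_val_self (e : Pref C) (x : C) : ((moveToBot e x) x : ℕ) = 0 := by
  have : moveToBot e x x = Fin.cycleRange (e x) (e x) := rfl
  rw [this]
  exact cycleRange_val_self (e x)

lemma mb_topC_ne (hm : 2 ≤ Fintype.card C) (e : Pref C) (x : C) :
    topC (moveToBot e x) ≠ x := by
  intro h
  rw [topC_eq_iff, mb_val_self] at h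
  omega

lemma bottom_pref {P : Pref C} {w z : C} (hw : (P w : ℕ) = 0) (hz : z ≠ w) :
    PrefOver P z w := by
  rw [prefover_def, hw]
  have : (P z : ℕ) ≠ 0 := fun h => hz (rank_inj (h.trans hw.symm))
  omega

/-- The canonical ballot with `p` on top, `q` second, `r` third. -/
noncomputable def stack3 [Fintype C] [Nonempty C] [DecidableEq C] (p q r : C) : Pref C :=
  moveToTop (moveToTop (moveToTop (Fintype.equivFin C) r) q) p

lemma stack3_facts (hm : 3 ≤ Fintype.card C) {p q r : C}
    (hpq : p ≠ q) (hpr : p ≠ r) (hqr : q ≠ r) :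
    topC (stack3 p q r) = p ∧ ((stack3 p q r) q : ℕ) = Fintype.card C - 2 ∧
      ((stack3 p q r) r : ℕ) = Fintype.card C - 3 := by
  have h1r : ((moveToTop (Fintype.equivFin C) r) r : ℕ) = Fintype.card C - 1 :=
    mt_val_self _ r
  have h1q : ((moveToTop (Fintype.equivFin C) r) q : ℕ) < Fintype.card C - 1 := by
    have hb := rank_lt_card (moveToTop (Fintype.equivFin C) r) q
    have hne : ((moveToTop (Fintype.equivFin C) r) q : ℕ)
        ≠ ((moveToTop (Fintype.equivFin C) r) r : ℕ) := fun h => hqr (rank_inj h)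
    omega
  have h2q : ((moveToTop (moveToTop (Fintype.equivFin C) r) q) q : ℕ)
      = Fintype.card C - 1 := mt_val_self _ q
  have h2r : ((moveToTop (moveToTop (Fintype.equivFin C) r) q) r : ℕ)
      = Fintype.card C - 2 := by
    have := mt_val_gt (e := moveToTop (Fintype.equivFin C) r) (x := q) (z := r) (by omega)
    omega
  have h2p : ((moveToTop (moveToTop (Fintype.equivFin C) r) q) p : ℕ)
      ≤ Fintype.card C - 3 := by
    have hb := rank_lt_card (moveToTop (moveToTop (Fintype.equivFin C) r) q) p
    have hq' : ((moveToTop (moveToTop (Fintype.equivFin C) r) q) p : ℕ)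
        ≠ ((moveToTop (moveToTop (Fintype.equivFin C) r) q) q : ℕ) := fun h => hpq (rank_inj h)
    have hr' : ((moveToTop (moveToTop (Fintype.equivFin C) r) q) p : ℕ)
        ≠ ((moveToTop (moveToTop (Fintype.equivFin C) r) q) r : ℕ) := fun h => hpr (rank_inj h)
    omega
  refine ⟨mt_topC _ p, ?_, ?_⟩
  · have := mt_val_gt (e := moveToTop (moveToTop (Fintype.equivFin C) r) q) (x := p) (z := q)
      (by omega)
    show ((moveToTop (moveToTop (moveToTop (Fintype.equivFin C) r) q) p) q : ℕ) = _
    omega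
  · have := mt_val_gt (e := moveToTop (moveToTop (Fintype.equivFin C) r) q) (x := p) (z := r)
      (by omega)
    show ((moveToTop (moveToTop (moveToTop (Fintype.equivFin C) r) q) p) r : ℕ) = _
    omega

end Lemmas5

section Lemmas6
set_option linter.unusedSectionVars false
set_option maxHeartbeats 800000
variable [Fintype C] [Nonempty C] [DecidableEq C] {n : ℕ}
  {v : (Fin n → Pref C) → C → ℝ}

/-- Interior swap lemma: moving `y` up past `a` in voter `i`'s ballot does not
change the selection probability of `y`, provided some third candidate `c` is
still ranked above `y`. -/
lemma interior_swap (hm : 3 ≤ Fintype.card C) (hv : IsVotingRule v)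
    (hpr : PairwiseResponsive v) (hpi : PairwiseIsolated v)
    (hsw : SuperWeakUnanimity 0 v) {i : Fin n} {Pvec : Fin n → Pref C} {a y c : C}
    (hda : DirAbove (Pvec i) a y) (hcy : PrefOver (Pvec i) c y) (hca : c ≠ a) :
    v (Function.update Pvec i (swapIn (Pvec i) a y)) y = v Pvec y := by
  classical
  have hay : a ≠ y := dirAbove_ne hda
  have hcyne : c ≠ y := prefover_ne hcy
  obtain ⟨htT, hqT, hrT⟩ := stack3_facts hm hca hcyne hay
  obtain ⟨htF, hqF, hrF⟩ := stack3_facts hm hcyne hca (Ne.symm hay)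
  have hDt : PrefOver (stack3 c a y) a y := by
    rw [prefover_def, hqT, hrT]; omega
  have hDf : PrefOver (stack3 c y a) y a := by
    rw [prefover_def, hqF, hrF]; omega
  set Pvec' : Fin n → Pref C := fun j =>
    if j = i then Pvec i else if PrefOver (Pvec j) a y then stack3 c a y else stack3 c y a
    with hPvec'
  have hP'i : Pvec' i = Pvec i := by rw [hPvec']; simp
  have hbits : ∀ j, j ≠ i → (PrefOver (Pvec j) a y ↔ PrefOver (Pvec' j) a y) := by
    intro j hj
    rw [hPvec']
    simp only [if_neg hj]
    by_cases hb : PrefOver (Pvec j) a y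
    · rw [if_pos hb]; exact iff_of_true hb hDt
    · rw [if_neg hb]; exact iff_of_false hb (prefover_asymm hDf)
  have hiso := hpi i Pvec Pvec' a y hda hP'i hbits
  have htops' : ∀ j, j ≠ i → topC (Pvec' j) = c := by
    intro j hj
    rw [hPvec']
    simp only [if_neg hj]
    by_cases hb : PrefOver (Pvec j) a y
    · rw [if_pos hb]; exact htT
    · rw [if_neg hb]; exact htF
  -- v Pvec' y = 0
  have hz1 : v Pvec' y = 0 := by
    have hMT : ∀ z, PrefOver (Pvec' i) z y ↔ PrefOver (moveToTop (Pvec i) c) z y := by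
      intro z
      rw [hP'i]
      by_cases hzc : z = c
      · rw [hzc]
        refine iff_of_true hcy ?_
        have htc := mt_topC (Pvec i) c
        have hh := prefover_topC (P := moveToTop (Pvec i) c) (z := y)
          (by rw [htc]; exact Ne.symm hcyne)
        rwa [htc] at hh
      · exact (mt_pref hzc (Ne.symm hcyne)).symm
    rw [← ML hpr hMT]
    refine strong_unanimity_zero hv hpr hsw (c := c) ?_ (Ne.symm hcyne)
    intro j
    by_cases hj : j = i
    · subst hj; rw [Function.update_self]; exact mt_topC _ c
    · rw [Function.update_of_ne hj]; exact htops' j hj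
  -- v (update Pvec' i SB) y = 0
  have hda' : ((Pvec i) a : ℕ) = ((Pvec i) y : ℕ) + 1 := hda
  have hSBc : PrefOver (swapIn (Pvec i) a y) c y := by
    rw [prefover_def, swapIn_apply_right, swapIn_apply_other (Pvec i) hca hcyne]
    have h1 : ((Pvec i) c : ℕ) ≠ ((Pvec i) a : ℕ) := fun h => hca (rank_inj h)
    have h2 := (prefover_def (Pvec i) c y).mp hcy
    omega
  have hz2 : v (Function.update Pvec' i (swapIn (Pvec i) a y)) y = 0 := by
    have hMT2 : ∀ z, PrefOver ((Function.update Pvec' i (swapIn (Pvec i) a y)) i) z y ↔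
        PrefOver (moveToTop (swapIn (Pvec i) a y) c) z y := by
      intro z
      rw [Function.update_self]
      by_cases hzc : z = c
      · rw [hzc]
        refine iff_of_true hSBc ?_
        have htc := mt_topC (swapIn (Pvec i) a y) c
        have hh := prefover_topC (P := moveToTop (swapIn (Pvec i) a y) c) (z := y)
          (by rw [htc]; exact Ne.symm hcyne)
        rwa [htc] at hh
      · exact (mt_pref hzc (Ne.symm hcyne)).symm
    rw [← ML hpr hMT2, Function.update_idem]
    refine strong_unanimity_zero hv hpr hsw (c := c) ?_ (Ne.symm hcyne)
    intro j
    by_cases hj : j = i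
    · subst hj; rw [Function.update_self]; exact mt_topC _ c
    · rw [Function.update_of_ne hj]; exact htops' j hj
  rw [hP'i] at hiso
  rw [hz1, hz2] at hiso
  linarith
end Lemmas6

section Lemmas7
set_option linter.unusedSectionVars false
set_option maxHeartbeats 1600000
variable [Fintype C] [Nonempty C] [DecidableEq C] {n : ℕ}
  {v : (Fin n → Pref C) → C → ℝ}

/-- The fixed bottom ballot for `x`. -/
noncomputable def botB [Fintype C] [DecidableEq C] (x : C) : Pref C :=
  moveToBot (Fintype.equivFin C) x

/-- The fixed top ballot for `x`. -/
noncomputable def topB [Fintype C] [DecidableEq C] (x : C) : Pref C :=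
  moveToTop (Fintype.equivFin C) x

lemma botB_val (x : C) : ((botB x) x : ℕ) = 0 := mb_val_self _ x

lemma botB_topC_ne (hm : 3 ≤ Fintype.card C) (x : C) : topC (botB x) ≠ x :=
  mb_topC_ne (by omega) _ x

lemma topB_topC (x : C) : topC (topB x) = x := mt_topC _ x

lemma move_to_bot_aux (hm : 3 ≤ Fintype.card C) (hv : IsVotingRule v)
    (hpr : PairwiseResponsive v) (hpi : PairwiseIsolated v)
    (hsw : SuperWeakUnanimity 0 v) (x : C) (i : Fin n) :
    ∀ (r : ℕ) (Pvec : Fin n → Pref C), ((Pvec i) x : ℕ) = r → topC (Pvec i) ≠ x →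
      v Pvec x = v (Function.update Pvec i (botB x)) x := by
  intro r
  induction r with
  | zero =>
    intro Pvec hr htop
    refine (ML hpr ?_).symm
    intro z
    constructor
    · intro h; exact bottom_pref (botB_val x) (prefover_ne h)
    · intro h; exact bottom_pref hr (prefover_ne h)
  | succ r IH =>
    intro Pvec hr htop
    have hbound := rank_lt_card (Pvec i) x
    have hne : ((Pvec i) x : ℕ) ≠ Fintype.card C - 1 := fun hc => htop (topC_eq_iff.mpr hc)
    have hr2 : r + 1 ≤ Fintype.card C - 2 := by omega
    have hrm : r < Fintype.card C := by omega
    set b := (Pvec i).symm ⟨r, hrm⟩ with hbdef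
    have hBb : ((Pvec i) b : ℕ) = r := by rw [hbdef]; simp
    have hd : DirAbove (Pvec i) x b := by
      show ((Pvec i) x : ℕ) = ((Pvec i) b : ℕ) + 1
      omega
    have hbx : b ≠ x := fun hc => by rw [hc] at hBb; omega
    have hcx : topC (Pvec i) ≠ x := htop
    have hcrank := topC_rank (Pvec i)
    have hcb : topC (Pvec i) ≠ b := fun hc => by rw [hc] at hcrank; omega
    have hcbpref : PrefOver (Pvec i) (topC (Pvec i)) b := prefover_topC (Ne.symm hcb)
    -- interior swap for b
    have hZ : v (Function.update Pvec i (swapIn (Pvec i) x b)) b = v Pvec b :=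
      interior_swap hm hv hpr hpi hsw hd hcbpref hcx
    -- sum trick
    have hx : v (Function.update Pvec i (swapIn (Pvec i) x b)) x = v Pvec x := by
      have hs1 := hv.2 Pvec
      have hs2 := hv.2 (Function.update Pvec i (swapIn (Pvec i) x b))
      have e1 := Finset.sum_erase_add Finset.univ (v Pvec) (Finset.mem_univ x)
      have e2 := Finset.sum_erase_add Finset.univ
        (v (Function.update Pvec i (swapIn (Pvec i) x b))) (Finset.mem_univ x)
      have hcongr : ∑ z ∈ Finset.univ.erase x,
          v (Function.update Pvec i (swapIn (Pvec i) x b)) z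
          = ∑ z ∈ Finset.univ.erase x, v Pvec z := by
        refine Finset.sum_congr rfl ?_
        intro z hz
        have hzx : z ≠ x := Finset.ne_of_mem_erase hz
        by_cases hzb : z = b
        · rw [hzb]; exact hZ
        · exact hpr Pvec i x b z hd hzx hzb
      linarith
    -- induction
    have hupd : ((Function.update Pvec i (swapIn (Pvec i) x b)) i x : ℕ) = r := by
      rw [Function.update_self, swapIn_apply_left]; exact hBb
    have htop2 : topC ((Function.update Pvec i (swapIn (Pvec i) x b)) i) ≠ x := by
      intro hc
      rw [topC_eq_iff] at hc
      rw [hupd] at hc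
      omega
    have := IH (Function.update Pvec i (swapIn (Pvec i) x b)) hupd htop2
    rw [Function.update_idem] at this
    rw [← this, hx]

lemma move_to_bot (hm : 3 ≤ Fintype.card C) (hv : IsVotingRule v)
    (hpr : PairwiseResponsive v) (hpi : PairwiseIsolated v)
    (hsw : SuperWeakUnanimity 0 v) {x : C} {i : Fin n} {Pvec : Fin n → Pref C}
    (htop : topC (Pvec i) ≠ x) :
    v Pvec x = v (Function.update Pvec i (botB x)) x :=
  move_to_bot_aux hm hv hpr hpi hsw x i _ Pvec rfl htop

/-- Top-arrival delta is independent of the other voters' ballots. -/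
lemma top_arrival (hm : 3 ≤ Fintype.card C) (hv : IsVotingRule v)
    (hpr : PairwiseResponsive v) (hpi : PairwiseIsolated v)
    (hsw : SuperWeakUnanimity 0 v) {i : Fin n} {B : Pref C} {a y c : C}
    (hda : DirAbove B a y) (hca : c ≠ a) (hcy : c ≠ y)
    {Pvec Qvec : Fin n → Pref C} (hP : Pvec i = B) (hQ : Qvec i = B) :
    v (Function.update Pvec i (swapIn B a y)) y - v Pvec y
      = v (Function.update Qvec i (swapIn B a y)) y - v Qvec y := by
  classical
  have hay : a ≠ y := dirAbove_ne hda
  obtain ⟨htD, hqD, hrD⟩ := stack3_facts hm hca hcy hay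
  have hDd : DirAbove (stack3 c a y) a y := by
    show ((stack3 c a y) a : ℕ) = ((stack3 c a y) y : ℕ) + 1
    rw [hqD, hrD]; omega
  have hDay : PrefOver (stack3 c a y) a y := dirAbove_prefover hDd
  have hDcy : PrefOver (stack3 c a y) c y := by
    rw [prefover_def, hrD]
    have := topC_rank (stack3 c a y)
    rw [htD] at this
    rw [this]; omega
  have hD'ya : PrefOver (swapIn (stack3 c a y) a y) y a := by
    rw [prefover_def, swapIn_apply_left, swapIn_apply_right, hqD, hrD]; omega
  set D := stack3 c a y with hDdef
  set D' := swapIn D a y with hD'def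
  set prof : Finset (Fin n) → (Fin n → Pref C) :=
    fun s j => if j = i then B else if j ∈ s then D' else D with hprofdef
  have hprofi : ∀ s, prof s i = B := by intro s; rw [hprofdef]; simp
  -- one isolation step
  have key1 : ∀ (P : Fin n → Pref C), P i = B →
      v (Function.update P i (swapIn B a y)) y - v P y
        = v (Function.update (prof (Finset.univ.filter
            (fun j => ¬ (j = i) ∧ ¬ PrefOver (P j) a y))) i (swapIn B a y)) y
          - v (prof (Finset.univ.filter (fun j => ¬ (j = i) ∧ ¬ PrefOver (P j) a y))) y := by
    intro P hPi
    have hbits : ∀ j, j ≠ i → (PrefOver (P j) a y ↔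
        PrefOver ((prof (Finset.univ.filter
          (fun j => ¬ (j = i) ∧ ¬ PrefOver (P j) a y))) j) a y) := by
      intro j hj
      rw [hprofdef]
      simp only [if_neg hj, Finset.mem_filter, Finset.mem_univ, true_and]
      by_cases hb : PrefOver (P j) a y
      · rw [if_neg (by simp [hb])]
        exact iff_of_true hb hDay
      · rw [if_pos ⟨hj, hb⟩]
        exact iff_of_false hb (prefover_asymm hD'ya)
    have := hpi i P _ a y (by rw [hPi]; exact hda) (by rw [hprofi, hPi]) hbits
    rw [hprofi, hPi] at this
    exact this.symm
  -- flipping bits does not change the delta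
  have key2 : ∀ (s : Finset (Fin n)), i ∉ s →
      v (Function.update (prof s) i (swapIn B a y)) y - v (prof s) y
        = v (Function.update (prof ∅) i (swapIn B a y)) y - v (prof ∅) y := by
    intro s
    induction s using Finset.induction_on with
    | empty => intro _; rfl
    | insert _ _ hjt =>
      rename_i j t IH
      intro hins
      have hji : j ≠ i := fun hc => hins (by rw [hc]; exact Finset.mem_insert_self i t)
      have hit : i ∉ t := fun hc => hins (Finset.mem_insert_of_mem hc)
      have hprofj : prof t j = D := by
        rw [hprofdef]; simp only [if_neg hji, if_neg hjt]
      have hprofeq : prof (insert j t) = Function.update (prof t) j D' := by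
        funext k
        by_cases hk : k = j
        · rw [hk, Function.update_self, hprofdef]
          simp only [if_neg hji, if_pos (Finset.mem_insert_self j t)]
        · rw [Function.update_of_ne hk, hprofdef]
          simp only [Finset.mem_insert]
          by_cases hki : k = i
          · rw [if_pos hki, if_pos hki]
          · rw [if_neg hki, if_neg hki]
            by_cases hkt : k ∈ t
            · rw [if_pos (Or.inr hkt), if_pos hkt]
            · rw [if_neg (by rintro (h | h); exact hk h; exact hkt h), if_neg hkt]
      have hZ1 : v (Function.update (prof t) j D') y = v (prof t) y := by
        have := interior_swap hm hv hpr hpi hsw (i := j) (Pvec := prof t) (a := a) (y := y)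
          (c := c) (by rw [hprofj]; exact hDd) (by rw [hprofj]; exact hDcy) hca
        rwa [hprofj] at this
      have hZ2 : v (Function.update (Function.update (prof t) i (swapIn B a y)) j D') y
          = v (Function.update (prof t) i (swapIn B a y)) y := by
        have hb2 : (Function.update (prof t) i (swapIn B a y)) j = D := by
          rw [Function.update_of_ne hji]; exact hprofj
        have := interior_swap hm hv hpr hpi hsw (i := j)
          (Pvec := Function.update (prof t) i (swapIn B a y)) (a := a) (y := y) (c := c)
          (by rw [hb2]; exact hDd) (by rw [hb2]; exact hDcy) hca
        rwa [hb2] at this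
      have hcomm : Function.update (Function.update (prof t) j D') i (swapIn B a y)
          = Function.update (Function.update (prof t) i (swapIn B a y)) j D' :=
        Function.update_comm hji _ _ _
      rw [hprofeq, hcomm, hZ1, hZ2]
      exact IH hit
  have hiP : i ∉ Finset.univ.filter (fun j => ¬ (j = i) ∧ ¬ PrefOver (Pvec j) a y) := by
    simp
  have hiQ : i ∉ Finset.univ.filter (fun j => ¬ (j = i) ∧ ¬ PrefOver (Qvec j) a y) := by
    simp
  rw [key1 Pvec hP, key1 Qvec hQ, key2 _ hiP, key2 _ hiQ]

end Lemmas7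

section Final
set_option linter.unusedSectionVars false
set_option maxHeartbeats 1600000
variable [Fintype C] [Nonempty C] [DecidableEq C] {n : ℕ}

lemma update_comp_equiv {α : Type*} (f : Fin n → α) (σ : Equiv.Perm (Fin n))
    (a : Fin n) (b : α) :
    (Function.update f a b) ∘ σ = Function.update (f ∘ σ) (σ.symm a) b := by
  funext j
  by_cases hj : σ j = a
  · have hj' : j = σ.symm a := by rw [← hj]; simp
    rw [hj', Function.comp_apply, Function.update_self]
    have : σ (σ.symm a) = a := by simp
    rw [this, Function.update_self]
  · have hj' : j ≠ σ.symm a := fun hc => hj (by rw [hc]; simp)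
    rw [Function.comp_apply, Function.update_of_ne hj, Function.update_of_ne hj']
    rfl

lemma key_theorem (hm : 3 ≤ Fintype.card C) (hn : 1 ≤ n)
    (v : (Fin n → Pref C) → C → ℝ) (hv : IsVotingRule v) (han : Anonymous v)
    (hpr : PairwiseResponsive v) (hpi : PairwiseIsolated v)
    (hsw : SuperWeakUnanimity 0 v) :
    ∀ (Pvec : Fin n → Pref C) (x : C), v Pvec x = vdict Pvec x := by
  classical
  intro Pvec x
  -- the second-ranked candidate of the top ballot
  have hm2 : Fintype.card C - 2 < Fintype.card C := by omega
  set y₂ := (topB x).symm ⟨Fintype.card C - 2, hm2⟩ with hy₂def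
  have hTy₂ : ((topB x) y₂ : ℕ) = Fintype.card C - 2 := by rw [hy₂def]; simp
  have hTx : ((topB x) x : ℕ) = Fintype.card C - 1 := mt_val_self _ x
  have hy₂x : y₂ ≠ x := fun hc => by rw [hc, hTx] at hTy₂; omega
  set Tpre := swapIn (topB x) x y₂ with hTpredef
  have hTpx : ((Tpre) x : ℕ) = Fintype.card C - 2 := by
    rw [hTpredef, swapIn_apply_left]; exact hTy₂
  have hTpy : ((Tpre) y₂ : ℕ) = Fintype.card C - 1 := by
    rw [hTpredef, swapIn_apply_right]; exact hTx
  have hdaT : DirAbove Tpre y₂ x := by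
    show ((Tpre) y₂ : ℕ) = ((Tpre) x : ℕ) + 1
    rw [hTpx, hTpy]; omega
  have hTptop : topC Tpre ≠ x := by
    intro hc
    rw [topC_eq_iff] at hc
    rw [hTpx] at hc; omega
  have hTswap : swapIn Tpre y₂ x = topB x := by
    rw [hTpredef]
    apply Equiv.ext
    intro cc
    show (topB x) ((Equiv.swap x y₂) ((Equiv.swap y₂ x) cc)) = (topB x) cc
    rw [Equiv.swap_comm y₂ x, Equiv.swap_apply_self]
  -- a third candidate
  obtain ⟨c₃, hc₃⟩ : ∃ c, c ≠ y₂ ∧ c ≠ x := by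
    have hsub : ({y₂, x} : Finset C) ⊆ Finset.univ := Finset.subset_univ _
    have hcard : ({y₂, x} : Finset C).card ≤ 2 := Finset.card_insert_le _ _ |>.trans (by simp)
    have : 0 < (Finset.univ \ ({y₂, x} : Finset C)).card := by
      rw [Finset.card_sdiff_of_subset hsub, Finset.card_univ]
      omega
    obtain ⟨c, hc⟩ := Finset.card_pos.mp this
    rw [Finset.mem_sdiff, Finset.mem_insert, Finset.mem_singleton] at hc
    exact ⟨c, fun h => hc.2 (Or.inl h), fun h => hc.2 (Or.inr h)⟩
  -- profiles indexed by the top set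
  set QS : Finset (Fin n) → (Fin n → Pref C) :=
    fun s j => if j ∈ s then topB x else botB x with hQSdef
  -- reference delta
  set i₀ : Fin n := ⟨0, by omega⟩ with hi₀def
  set R : Fin n → Pref C := Function.update (fun _ => botB x) i₀ Tpre with hRdef
  set d : ℝ := v (Function.update R i₀ (swapIn Tpre y₂ x)) x - v R x with hddef
  -- increment lemma
  have hstep : ∀ (s : Finset (Fin n)) (i : Fin n), i ∉ s →
      v (QS (insert i s)) x = v (QS s) x + d := by
    intro s i his
    have hQR : QS (insert i s) = Function.update (QS s) i (topB x) := by
      funext j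
      by_cases hj : j = i
      · rw [hj, Function.update_self]
        simp only [hQSdef, Finset.mem_insert_self, if_true]
      · rw [Function.update_of_ne hj]
        simp only [hQSdef, Finset.mem_insert, hj, false_or]
    set P₁ := Function.update (QS s) i Tpre with hP₁def
    have hP₁i : P₁ i = Tpre := Function.update_self _ _ _
    have h1 : Function.update P₁ i (swapIn Tpre y₂ x) = Function.update (QS s) i (topB x) := by
      rw [hP₁def, Function.update_idem, hTswap]
    -- v P₁ x = v (QS s) x via move_to_bot
    have h2 : v P₁ x = v (QS s) x := by
      have := move_to_bot hm hv hpr hpi hsw (i := i) (Pvec := P₁)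
        (by rw [hP₁i]; exact hTptop)
      rw [hP₁def, Function.update_idem] at this
      have hQsi : QS s i = botB x := by simp only [hQSdef, if_neg his]
      rw [this]
      congr 1
      funext j
      by_cases hj : j = i
      · rw [hj, Function.update_self, hQsi]
      · rw [Function.update_of_ne hj]
    -- the delta equals d via top_arrival and anonymity
    have h3 : v (Function.update P₁ i (swapIn Tpre y₂ x)) x - v P₁ x = d := by
      set σ : Equiv.Perm (Fin n) := Equiv.swap i i₀ with hσdef
      have hRσi : (R ∘ σ) i = Tpre := by
        rw [Function.comp_apply, hσdef, Equiv.swap_apply_left, hRdef, Function.update_self]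
      have hTA := top_arrival hm hv hpr hpi hsw (i := i) (B := Tpre) (a := y₂) (y := x)
        (c := c₃) hdaT hc₃.1 hc₃.2 (Pvec := P₁) (Qvec := R ∘ σ) hP₁i hRσi
      have hσsymm : σ.symm i₀ = i := by rw [hσdef]; simp
      have hcomp := update_comp_equiv R σ i₀ (swapIn Tpre y₂ x)
      rw [hσsymm] at hcomp
      have ha1 : v (Function.update (R ∘ σ) i (swapIn Tpre y₂ x)) x
          = v (Function.update R i₀ (swapIn Tpre y₂ x)) x := by
        rw [← hcomp]
        exact han σ _ x
      have ha2 : v (R ∘ σ) x = v R x := han σ R x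
      rw [hTA, ha1, ha2, hddef]
    rw [hQR, ← h1]
    linarith
  -- base cases
  have hbase : v (QS ∅) x = 0 := by
    refine strong_unanimity_zero hv hpr hsw (c := topC (botB x)) ?_
      (fun hc => botB_topC_ne hm x hc.symm)
    intro j
    simp only [hQSdef, Finset.notMem_empty, if_false]
  have hfull : v (QS Finset.univ) x = 1 := by
    refine strong_unanimity hv hpr hsw ?_
    intro j
    simp only [hQSdef, Finset.mem_univ, if_true]
    exact topB_topC x
  -- F s = s.card * d
  have hFs : ∀ s : Finset (Fin n), v (QS s) x = s.card * d := by
    intro s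
    induction s using Finset.induction_on with
    | empty => rw [hbase]; simp
    | insert _ _ his =>
      rename_i i s IH
      rw [hstep s i his, IH, Finset.card_insert_of_notMem his]
      push_cast
      ring
  -- d = 1/n
  have hd1 : (n : ℝ) * d = 1 := by
    have := hFs Finset.univ
    rw [hfull, Finset.card_univ, Fintype.card_fin] at this
    linarith
  have hnne : (n : ℝ) ≠ 0 := by
    have : (0 : ℝ) < n := by exact_mod_cast hn
    linarith
  -- Step A: reduce Pvec to QS S
  set S : Finset (Fin n) := Finset.univ.filter (fun i => topC (Pvec i) = x) with hSdef
  have hstepA : v Pvec x = v (QS S) x := by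
    have key : ∀ s : Finset (Fin n),
        v (fun j => if j ∈ s then (if topC (Pvec j) = x then topB x else botB x) else Pvec j) x
          = v Pvec x := by
      intro s
      induction s using Finset.induction_on with
      | empty => simp
      | insert _ _ his =>
        rename_i i s IH
        set hyb := fun j => if j ∈ s then
          (if topC (Pvec j) = x then topB x else botB x) else Pvec j with hhybdef
        have hhybi : hyb i = Pvec i := by rw [hhybdef]; simp [his]
        have hprofeq : (fun j => if j ∈ insert i s then
            (if topC (Pvec j) = x then topB x else botB x) else Pvec j)
            = Function.update hyb i (if topC (Pvec i) = x then topB x else botB x) := by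
          funext k
          by_cases hk : k = i
          · rw [hk, Function.update_self, if_pos (Finset.mem_insert_self i s)]
          · rw [Function.update_of_ne hk, hhybdef]
            simp only [Finset.mem_insert]
            by_cases hks : k ∈ s
            · rw [if_pos (Or.inr hks), if_pos hks]
            · rw [if_neg (by rintro (h | h); exact hk h; exact hks h), if_neg hks]
        rw [hprofeq, ← IH]
        by_cases htopi : topC (Pvec i) = x
        · rw [if_pos htopi]
          refine ML hpr ?_
          intro z
          rw [hhybi]
          exact iff_of_false (not_prefover_top htopi z) (not_prefover_top (topB_topC x) z)
        · rw [if_neg htopi]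
          exact (move_to_bot hm hv hpr hpi hsw (i := i) (Pvec := hyb)
            (by rw [hhybi]; exact htopi)).symm
    have hQSS : (fun j => if j ∈ Finset.univ then
        (if topC (Pvec j) = x then topB x else botB x) else Pvec j) = QS S := by
      funext j
      simp only [hQSdef, hSdef, Finset.mem_univ, if_true, Finset.mem_filter, true_and]
    rw [← hQSS, key Finset.univ]
  rw [hstepA, hFs S]
  have hdval : d = 1 / n := by
    field_simp at hd1 ⊢
    linarith
  rw [hdval]
  rw [vdict, hSdef]
  field_simp

end Final


/-- Exact case (McLennan's theorem as the ε = 0 instance). -/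
theorem mclennan_exact_case [Fintype C] [Nonempty C] [DecidableEq C]
    (hm : 3 ≤ Fintype.card C) {n : ℕ} (hn : 1 ≤ n)
    (v : (Fin n → Pref C) → C → ℝ) (hv : IsVotingRule v) (han : Anonymous v)
    (hpr : PairwiseResponsive v) (hpi : PairwiseIsolated v)
    (hsw : SuperWeakUnanimity 0 v) :
    ∀ (Pvec : Fin n → Pref C) (x : C), v Pvec x = vdict Pvec x := by
  exact key_theorem hm hn v hv han hpr hpi hsw
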